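/- Fix an integer n ≥ 1. (i) Let d, d′ ∈ A have degree < n−1 and let h, h′ be standard lifts for (0,d), (0,d′) of level tⁿ. Then there exist γ ∈ Γ₁(tⁿ) and λ ∈ K^× with γ·h·(0,1)ᵀ = λ·h′·(0,1)ᵀ if and only if d = d′. (ii) Every nonzero vector v ∈ K² for which there exist δ ∈ Γ₁(t) and μ ∈ K^× with δv = μ·(0,1)ᵀ satisfies: there exist d ∈ A of degree < n−1, a standard lift h for (0,d), γ ∈ Γ₁(tⁿ) and λ ∈ K^× with γv = λ·h·(0,1)ᵀ. Thus the cusps h_{(0,d)}(0) with d ∈ A/(t^{n−1}) form a complete set of representatives of the cusps of Γ₁(tⁿ) lying over 0. -/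

import Mathlib

open Polynomial Matrix

/-- `Γ₁(𝔫)` as a set of 2×2 matrices over `A = F[t]`:
matrices of determinant 1 congruent to `[[1,*],[0,1]]` mod `𝔫`. -/
def Gamma1 (F : Type*) [Field F] (n : Polynomial F) :
    Set (Matrix (Fin 2) (Fin 2) (Polynomial F)) :=
  {γ | γ.det = 1 ∧ n ∣ γ 1 0 ∧ n ∣ (γ 0 0 - 1) ∧ n ∣ (γ 1 1 - 1)}

/-- A standard lift `h = h_{(c,d)}` of level `tⁿ`: an element of `SL₂(A)` with
`h₁₂ ≡ 0`, `h₂₁ ≡ tc`, `h₂₂ ≡ 1 + td` and `h₁₁(1+td) ≡ 1 (mod tⁿ)`. -/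
def IsStdLift (F : Type*) [Field F] (n : ℕ) (c d : Polynomial F)
    (h : Matrix (Fin 2) (Fin 2) (Polynomial F)) : Prop :=
  h.det = 1 ∧ (X : Polynomial F) ^ n ∣ h 0 1 ∧
    (X : Polynomial F) ^ n ∣ (h 1 0 - X * c) ∧
    (X : Polynomial F) ^ n ∣ (h 1 1 - (1 + X * d)) ∧
    (X : Polynomial F) ^ n ∣ (h 0 0 * (1 + X * d) - 1)

private lemma colVec {F : Type*} [Field F] (M : Matrix (Fin 2) (Fin 2) (Polynomial F)) :
    (M.map (algebraMap (Polynomial F) (RatFunc F))).mulVec (![0, 1] : Fin 2 → RatFunc F) =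
      ![algebraMap (Polynomial F) (RatFunc F) (M 0 1),
        algebraMap (Polynomial F) (RatFunc F) (M 1 1)] := by
  funext i
  fin_cases i <;>
    simp [Matrix.mulVec, dotProduct, Fin.sum_univ_two]

private lemma eval_one_of_dvd {F : Type*} [Field F] {n : ℕ} (hn : 1 ≤ n)
    {Q d : Polynomial F} (h : (X : Polynomial F) ^ n ∣ Q - (1 + X * d)) :
    Q.eval 0 = 1 := by
  obtain ⟨u, hu⟩ := h
  have h2 := congrArg (Polynomial.eval 0) hu
  simp [zero_pow (show n ≠ 0 by omega), sub_eq_zero] at h2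
  exact h2

private lemma auxLift {F : Type*} [Field F] {n : ℕ} (hn : 1 ≤ n) (a b e₀ r s : Polynomial F)
    (hb : b - 1 = X * e₀) (hdet : b * s + a * r = 1) :
    ∃ d : Polynomial F, d.degree < ((n - 1 : ℕ) : WithBot ℕ) ∧
      ∃ h : Matrix (Fin 2) (Fin 2) (Polynomial F), IsStdLift F n 0 d h ∧
        ∃ y : Polynomial F, h 0 1 = a + y * b ∧ h 1 1 = b := by
  obtain ⟨c, hc⟩ : ∃ c : Polynomial F, 1 - c * b = (1 - b) ^ n :=
    ⟨∑ i ∈ Finset.range n, (1 - b) ^ i, by linear_combination geom_sum_mul (1 - b) n⟩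
  have hXn : (X : Polynomial F) ^ n ∣ (1 - b) ^ n := by
    refine ⟨(-e₀) ^ n, ?_⟩
    rw [show (1 : Polynomial F) - b = X * (-e₀) by linear_combination -hb, mul_pow]
  have hpow : (X : Polynomial F) ^ n = X * X ^ (n - 1) := by
    rw [← pow_succ']
    congr 1
    omega
  have hA : (X : Polynomial F) ^ n ∣ a + (-(a * c)) * b := by
    have e : a + (-(a * c)) * b = a * (1 - b) ^ n := by linear_combination a * hc
    rw [e]; exact hXn.mul_left a
  have hq : (X : Polynomial F) ^ n ∣ (-r) + (r * c) * b := by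
    have e : (-r) + (r * c) * b = -(r * (1 - b) ^ n) := by linear_combination -r * hc
    rw [e]
    exact dvd_neg.mpr (hXn.mul_left r)
  have hbd : (X : Polynomial F) ^ n ∣ b - (1 + X * (e₀ %ₘ X ^ (n - 1))) := by
    refine ⟨e₀ /ₘ X ^ (n - 1), ?_⟩
    rw [hpow]
    linear_combination hb - X * (Polynomial.modByMonic_add_div e₀ (X ^ (n - 1)))
  refine ⟨e₀ %ₘ X ^ (n - 1), ?_,
    !![(s - (-(a * c)) * r) + (r * c) * (a + (-(a * c)) * b), a + (-(a * c)) * b;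
       (-r) + (r * c) * b, b], ⟨?_, ?_, ?_, ?_, ?_⟩, -(a * c), by simp, by simp⟩
  · simpa [degree_X_pow] using Polynomial.degree_modByMonic_lt e₀ (monic_X_pow (n - 1))
  · rw [Matrix.det_fin_two_of]
    linear_combination hdet
  · simpa using hA
  · simpa using hq
  · simpa using hbd
  · have e : ((s - (-(a * c)) * r) + (r * c) * (a + (-(a * c)) * b)) *
        (1 + X * (e₀ %ₘ X ^ (n - 1))) - 1 =
        (a + (-(a * c)) * b) * ((-r) + (r * c) * b) -
          ((s - (-(a * c)) * r) + (r * c) * (a + (-(a * c)) * b)) *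
            (b - (1 + X * (e₀ %ₘ X ^ (n - 1)))) := by
      linear_combination hdet
    simp only [Matrix.cons_val', Matrix.cons_val_zero, Matrix.empty_val',
      Matrix.cons_val_fin_one, Matrix.cons_val_one, Matrix.head_cons, Matrix.head_fin_const,
      Matrix.of_apply]
    rw [e]
    exact dvd_sub (hA.mul_right _) (hbd.mul_left _)

set_option synthInstance.maxHeartbeats 1000000 in
theorem stmt7 (p : ℕ) (hp : p.Prime) (F : Type*) [Field F] [Fintype F] [CharP F p]
    (n : ℕ) (hn : 1 ≤ n) :
    (∀ d d' : Polynomial F, ∀ h h' : Matrix (Fin 2) (Fin 2) (Polynomial F),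
      d.degree < ((n - 1 : ℕ) : WithBot ℕ) → d'.degree < ((n - 1 : ℕ) : WithBot ℕ) →
      IsStdLift F n 0 d h → IsStdLift F n 0 d' h' →
      ((∃ γ ∈ Gamma1 F ((X : Polynomial F) ^ n), ∃ l : RatFunc F, l ≠ 0 ∧
          (γ.map (algebraMap (Polynomial F) (RatFunc F))).mulVec
            ((h.map (algebraMap (Polynomial F) (RatFunc F))).mulVec
              (![0, 1] : Fin 2 → RatFunc F)) =
          l • ((h'.map (algebraMap (Polynomial F) (RatFunc F))).mulVec
              (![0, 1] : Fin 2 → RatFunc F))) ↔ d = d')) ∧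
    (∀ v : Fin 2 → RatFunc F, v ≠ 0 →
      (∃ δ ∈ Gamma1 F (X : Polynomial F), ∃ m : RatFunc F, m ≠ 0 ∧
        (δ.map (algebraMap (Polynomial F) (RatFunc F))).mulVec v = ![0, m]) →
      ∃ d : Polynomial F, d.degree < ((n - 1 : ℕ) : WithBot ℕ) ∧
        ∃ h : Matrix (Fin 2) (Fin 2) (Polynomial F), IsStdLift F n 0 d h ∧
          ∃ γ ∈ Gamma1 F ((X : Polynomial F) ^ n), ∃ l : RatFunc F, l ≠ 0 ∧
            (γ.map (algebraMap (Polynomial F) (RatFunc F))).mulVec v =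
              l • ((h.map (algebraMap (Polynomial F) (RatFunc F))).mulVec
                (![0, 1] : Fin 2 → RatFunc F))) := by
  constructor
  · intro d d' h h' hd hd' hh hh'
    obtain ⟨hhdet, hh01, hh10, hh11, hh00⟩ := hh
    obtain ⟨hh'det, hh'01, hh'10, hh'11, hh'00⟩ := hh'
    have hh10' : (X : Polynomial F) ^ n ∣ h 1 0 := by simpa using hh10
    have hh'10' : (X : Polynomial F) ^ n ∣ h' 1 0 := by simpa using hh'10
    constructor
    · rintro ⟨γ, ⟨hγdet, hγ10, hγ00, hγ11⟩, l, hl, heq⟩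
      rw [Matrix.mulVec_mulVec, ← Matrix.map_mul, colVec, colVec] at heq
      have hP := congrFun heq 0
      have hQ := congrFun heq 1
      simp only [Matrix.cons_val_zero, Matrix.cons_val_one, Matrix.head_cons,
        Pi.smul_apply, smul_eq_mul] at hP hQ
      have hcross : (γ * h) 0 1 * h' 1 1 = (γ * h) 1 1 * h' 0 1 := by
        apply IsFractionRing.injective (Polynomial F) (RatFunc F)
        rw [_root_.map_mul, _root_.map_mul, hP, hQ]; ring
      have detg : (γ * h) 0 0 * (γ * h) 1 1 - (γ * h) 0 1 * (γ * h) 1 0 = 1 := by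
        rw [← Matrix.det_fin_two, Matrix.det_mul, hγdet, hhdet, one_mul]
      have deth' : h' 0 0 * h' 1 1 - h' 0 1 * h' 1 0 = 1 := by
        rw [← Matrix.det_fin_two]; exact hh'det
      have hQdvd : (X : Polynomial F) ^ n ∣ (γ * h) 1 1 - (1 + X * d) := by
        have e : (γ * h) 1 1 - (1 + X * d) =
            γ 1 0 * h 0 1 + (γ 1 1 - 1) * h 1 1 + (h 1 1 - (1 + X * d)) := by
          simp [Matrix.mul_apply, Fin.sum_univ_two]; ring
        rw [e]
        exact dvd_add (dvd_add (hγ10.mul_right _) (hγ11.mul_right _)) hh11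
      have hQ0 : ((γ * h) 1 1).eval 0 = 1 := eval_one_of_dvd hn hQdvd
      have hQ'0 : (h' 1 1).eval 0 = 1 := eval_one_of_dvd hn hh'11
      have hQne : (γ * h) 1 1 ≠ 0 := by
        intro h0; rw [h0] at hQ0; simp at hQ0
      have hd1 : (γ * h) 1 1 = h' 1 1 * (h' 0 0 * (γ * h) 1 1 - h' 1 0 * (γ * h) 0 1) := by
        linear_combination -((γ * h) 1 1) * deth' + h' 1 0 * hcross
      have hd2 : h' 1 1 = (γ * h) 1 1 * ((γ * h) 0 0 * h' 1 1 - (γ * h) 1 0 * h' 0 1) := by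
        linear_combination -(h' 1 1) * detg - (γ * h) 1 0 * hcross
      have hrs : ((γ * h) 0 0 * h' 1 1 - (γ * h) 1 0 * h' 0 1) *
          (h' 0 0 * (γ * h) 1 1 - h' 1 0 * (γ * h) 0 1) = 1 := by
        apply mul_left_cancel₀ hQne
        linear_combination -(h' 0 0 * (γ * h) 1 1 - h' 1 0 * (γ * h) 0 1) * hd2 - hd1
      have hu : IsUnit (h' 0 0 * (γ * h) 1 1 - h' 1 0 * (γ * h) 0 1) :=
        IsUnit.of_mul_eq_one _ (by rw [mul_comm]; exact hrs)
      obtain ⟨α, hαu, hα⟩ := Polynomial.isUnit_iff.mp hu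
      have hQeq : (γ * h) 1 1 = h' 1 1 * C α := by rw [hα]; exact hd1
      have hα1 : α = 1 := by
        have := congrArg (Polynomial.eval 0) hQeq
        simpa [hQ0, hQ'0] using this.symm
      rw [hα1, Polynomial.C_1, mul_one] at hQeq
      have hfin : (X : Polynomial F) ^ n ∣ X * d' - X * d := by
        have h2 : (X : Polynomial F) ^ n ∣ h' 1 1 - (1 + X * d) := hQeq ▸ hQdvd
        have h3 := dvd_sub h2 hh'11
        have e : (h' 1 1 - (1 + X * d)) - (h' 1 1 - (1 + X * d')) = X * d' - X * d := by ring
        rwa [e] at h3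
      obtain ⟨u, hu2⟩ := hfin
      have hdd : d' - d = X ^ (n - 1) * u := by
        apply mul_left_cancel₀ (Polynomial.X_ne_zero (R := F))
        have hpow : (X : Polynomial F) ^ n = X * X ^ (n - 1) := by
          rw [← pow_succ']; congr 1; omega
        rw [hpow] at hu2
        linear_combination hu2
      have hzero : d' - d = 0 := by
        refine Polynomial.eq_zero_of_dvd_of_degree_lt ⟨u, hdd⟩ ?_
        rw [degree_X_pow]
        exact lt_of_le_of_lt (degree_sub_le d' d) (max_lt hd' hd)
      have := sub_eq_zero.mp hzero
      exact this.symm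
    · rintro rfl
      have hγh : (h' * adjugate h) * h = h' := by
        rw [Matrix.mul_assoc, Matrix.adjugate_mul, hhdet, one_smul, Matrix.mul_one]
      have hadj : adjugate h = !![h 1 1, -(h 0 1); -(h 1 0), h 0 0] :=
        Matrix.adjugate_fin_two h
      refine ⟨h' * adjugate h, ⟨?_, ?_, ?_, ?_⟩, 1, one_ne_zero, ?_⟩
      · have := congrArg Matrix.det hγh
        rw [Matrix.det_mul, hhdet, mul_one] at this
        rw [this, hh'det]
      · have e : (h' * adjugate h) 1 0 = h' 1 0 * h 1 1 - h 1 0 * h' 1 1 := by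
          rw [hadj]; simp [Matrix.mul_apply, Fin.sum_univ_two]; ring
        rw [e]
        exact dvd_sub (hh'10'.mul_right _) (hh10'.mul_right _)
      · have e : (h' * adjugate h) 0 0 - 1 =
            h' 0 0 * (h 1 1 - (1 + X * d)) + (h' 0 0 * (1 + X * d) - 1) - h' 0 1 * h 1 0 := by
          rw [hadj]; simp [Matrix.mul_apply, Fin.sum_univ_two]; ring
        rw [e]
        exact dvd_sub (dvd_add (hh11.mul_left _) hh'00) (hh10'.mul_left _)
      · have e : (h' * adjugate h) 1 1 - 1 =
            -(h' 1 0 * h 0 1) + (h' 1 1 - (1 + X * d)) * h 0 0 + (h 0 0 * (1 + X * d) - 1) := by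
          rw [hadj]; simp [Matrix.mul_apply, Fin.sum_univ_two]; ring
        rw [e]
        exact dvd_add (dvd_add (dvd_neg.mpr (hh'10'.mul_right _)) (hh'11.mul_right _)) hh00
      · rw [Matrix.mulVec_mulVec, ← Matrix.map_mul, hγh, one_smul]
  · rintro v hv0 ⟨δ, ⟨hδdet, hδ10, hδ00, hδ11⟩, m, hm, hδv⟩
    have hdet2 : δ 0 0 * δ 1 1 - δ 0 1 * δ 1 0 = 1 := by
      rw [← Matrix.det_fin_two]; exact hδdet
    obtain ⟨e₀, he₀⟩ := hδ00
    obtain ⟨d, hd, h, hstd, y, hy01, hy11⟩ :=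
      auxLift hn (-(δ 0 1)) (δ 0 0) e₀ (δ 1 0) (δ 1 1) he₀ (by linear_combination hdet2)
    have hvf : v = ((adjugate δ).map (algebraMap (Polynomial F) (RatFunc F))).mulVec ![0, m] := by
      have h1 : ((adjugate δ).map (algebraMap (Polynomial F) (RatFunc F))).mulVec
          ((δ.map (algebraMap (Polynomial F) (RatFunc F))).mulVec v) =
          ((adjugate δ).map (algebraMap (Polynomial F) (RatFunc F))).mulVec ![0, m] := by
        rw [hδv]
      rwa [Matrix.mulVec_mulVec, ← Matrix.map_mul, Matrix.adjugate_mul, hδdet, one_smul,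
        Matrix.map_one _ (map_zero _) (map_one _), Matrix.one_mulVec] at h1
    refine ⟨d, hd, h, hstd, !![1, y; 0, 1],
      ⟨by rw [Matrix.det_fin_two_of]; ring, by simp, by simp, by simp⟩, m, hm, ?_⟩
    rw [hvf, colVec, hy01, hy11, Matrix.adjugate_fin_two]
    funext i
    fin_cases i <;>
      simp [Matrix.mulVec, dotProduct, Fin.sum_univ_two, _root_.map_add, _root_.map_mul, _root_.map_neg] <;>
      ring
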